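/- Every finite graph G of order n with minimum degree δ(G) ≥ 1 has a total dominating set of size at most (n / δ(G)) · (1 + log₂ Δ(G)), where Δ(G) is the maximum degree of G. -/

import Mathlib

open Finset

private lemma my_log_ge (a : ℝ) (h : 0 < a) : 1 - a⁻¹ ≤ Real.log a := by
  have h2 := Real.log_le_sub_one_of_pos (show (0:ℝ) < a⁻¹ by positivity)
  rw [Real.log_inv] at h2
  linarith

/-- Potential function for the greedy total-domination argument. -/
noncomputable def tdF (n d m : ℕ) : ℝ :=
  if m * d ≤ n then (m : ℝ) else ((n : ℝ) / d) * (1 + Real.log ((m : ℝ) * d / n))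

private lemma tdF_step (n d m m' : ℕ) (hd : 1 ≤ d) (hdn : d < n) (hm : 1 ≤ m)
    (h1 : (m' : ℝ) ≤ m - m * d / n) : tdF n d m' + 1 ≤ tdF n d m := by
  have hd0 : (0:ℝ) < d := by exact_mod_cast hd
  have hn0 : (0:ℝ) < n := by
    have : 0 < n := lt_of_le_of_lt (Nat.zero_le d) hdn
    exact_mod_cast this
  have hm0 : (0:ℝ) < m := by exact_mod_cast hm
  set c : ℝ := (n : ℝ) / d with hc
  have hc0 : 0 < c := by positivity
  have hc1 : 1 < c := (one_lt_div hd0).2 (by exact_mod_cast hdn)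
  have hfrac : 0 < (m:ℝ) * d / n := by positivity
  have hm'm : (m':ℝ) < m := lt_of_le_of_lt h1 (by linarith)
  unfold tdF
  split_ifs with hA hB hB
  · -- both small
    have h2 : m' < m := by exact_mod_cast hm'm
    have h3 : m' + 1 ≤ m := h2
    exact_mod_cast h3
  · -- m' small, m large
    push_neg at hB
    set x : ℝ := (m:ℝ) * d / n with hx
    have hx1 : 1 < x := (one_lt_div hn0).2 (by exact_mod_cast hB)
    have hx0 : 0 < x := by linarith
    have hcx : c * x = m := by rw [hc, hx]; field_simp
    have hm'c : (m':ℝ) ≤ c := by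
      rw [hc, le_div_iff₀ hd0]
      exact_mod_cast hA
    have hm'cx : (m':ℝ) ≤ c * x - x := by rw [hcx]; linarith [h1]
    have hlx : 1 - x⁻¹ ≤ Real.log x := my_log_ge x hx0
    have hcgoal : (n:ℝ)/d = c := rfl
    rw [hcgoal]
    rcases le_total x (c / (c - 1)) with hxc | hxc
    · have h2 : x * (c - 1) ≤ c := by
        rw [le_div_iff₀ (by linarith : (0:ℝ) < c - 1)] at hxc
        linarith
      have key1 : (c * x - x + 1) * x ≤ (c * (1 + (1 - x⁻¹))) * x := by
        have hexp : (c * (1 + (1 - x⁻¹))) * x = 2 * c * x - c := by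
          field_simp
          ring
        rw [hexp]
        nlinarith [mul_nonneg (sub_nonneg.2 hx1.le) (sub_nonneg.2 h2)]
      have key2 : c * x - x + 1 ≤ c * (1 + (1 - x⁻¹)) := le_of_mul_le_mul_right key1 hx0
      have key3 : c * (1 + (1 - x⁻¹)) ≤ c * (1 + Real.log x) :=
        mul_le_mul_of_nonneg_left (by linarith) (by linarith)
      linarith
    · have hy1 : (1:ℝ) < c / (c - 1) := (one_lt_div (by linarith)).2 (by linarith)
      have hly : 1 - (c / (c - 1))⁻¹ ≤ Real.log (c / (c - 1)) := my_log_ge _ (by linarith)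
      have hinv : (c / (c - 1))⁻¹ = (c - 1) / c := inv_div c (c - 1) ▸ rfl
      have hlog2 : Real.log (c / (c - 1)) ≤ Real.log x := Real.log_le_log (by linarith) hxc
      have h6 : 1 - (c - 1) / c ≤ Real.log x := by rw [hinv] at hly; linarith
      have h7 : 1 - (c - 1) / c = 1 / c := by field_simp; ring
      have h8 : c * (1 / c) ≤ c * Real.log x :=
        mul_le_mul_of_nonneg_left (by rw [← h7]; exact h6) (by linarith)
      have h9 : c * (1 / c) = 1 := by field_simp
      nlinarith
  · -- m' large, m small: impossible
    exfalso
    have h2 : m' ≤ m := by exact_mod_cast hm'm.le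
    exact hA (le_trans (Nat.mul_le_mul_right d h2) hB)
  · -- both large
    push_neg at hA hB
    have hm'1 : 1 ≤ m' := by
      rcases Nat.eq_zero_or_pos m' with rfl | h
      · simp at hA
      · exact h
    have hm'0 : (0:ℝ) < m' := by exact_mod_cast hm'1
    have hx0 : (0:ℝ) < (m:ℝ) * d / n := hfrac
    have hx'0 : (0:ℝ) < (m':ℝ) * d / n := by positivity
    have hq : ((m:ℝ) * d / n) / ((m':ℝ) * d / n) = (m:ℝ) / m' := by
      field_simp
    have hdiv : Real.log ((m:ℝ) * d / n) - Real.log ((m':ℝ) * d / n)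
        = Real.log ((m:ℝ) / m') := by
      rw [← Real.log_div hx0.ne' hx'0.ne', hq]
    have h3 : 1 - ((m:ℝ) / m')⁻¹ ≤ Real.log ((m:ℝ) / m') := my_log_ge _ (by positivity)
    have h4 : ((m:ℝ) / m')⁻¹ = (m':ℝ) / m := inv_div (m:ℝ) (m':ℝ) ▸ rfl
    have h5 : (m':ℝ) / m ≤ 1 - (d:ℝ) / n := by
      rw [div_le_iff₀ hm0]
      have : (1 - (d:ℝ)/n) * m = m - m * d / n := by field_simp
      linarith [this ▸ h1]
    have h6 : (d:ℝ)/n ≤ Real.log ((m:ℝ) / m') := by rw [h4] at h3; linarith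
    have h8 : c * ((d:ℝ)/n) ≤ c * Real.log ((m:ℝ)/m') :=
      mul_le_mul_of_nonneg_left h6 (by linarith)
    have h9 : c * ((d:ℝ)/n) = 1 := by rw [hc]; field_simp
    have h11 : 1 ≤ c * (Real.log ((m:ℝ) * d / n) - Real.log ((m':ℝ) * d / n)) := by
      rw [hdiv]; linarith
    rw [mul_sub] at h11
    have hcg : (n:ℝ)/d = c := rfl
    rw [hcg, mul_add, mul_add, mul_one]
    linarith


section Aux
variable {V : Type*} [Fintype V] [DecidableEq V] (G : SimpleGraph V) [DecidableRel G.Adj]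

omit [DecidableEq V] in
private lemma exists_good_vertex (U : Finset V) (hU : U.Nonempty) :
    ∃ w : V, U.card * G.minDegree ≤ Fintype.card V * (U.filter fun u => G.Adj u w).card := by
  have : Nonempty V := ⟨hU.choose⟩
  have hsum : ∑ u ∈ U, G.degree u = ∑ w : V, (U.filter fun u => G.Adj u w).card := by
    simp only [Finset.card_filter]
    rw [Finset.sum_comm]
    refine Finset.sum_congr rfl fun u _ => ?_
    rw [← SimpleGraph.card_neighborFinset_eq_degree]
    have : G.neighborFinset u = univ.filter fun w => G.Adj u w := by
      ext w; simp [SimpleGraph.neighborFinset]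
    rw [this, Finset.card_filter]
  have h1 : U.card * G.minDegree ≤ ∑ u ∈ U, G.degree u := by
    simpa using Finset.card_nsmul_le_sum U _ _ fun u _ => G.minDegree_le_degree u
  obtain ⟨w, -, hw⟩ := Finset.exists_max_image univ
    (fun w => (U.filter fun u => G.Adj u w).card) univ_nonempty
  refine ⟨w, ?_⟩
  have h2 : ∑ w' : V, (U.filter fun u => G.Adj u w').card
      ≤ Fintype.card V * (U.filter fun u => G.Adj u w).card := by
    simpa using Finset.sum_le_card_nsmul univ _ _ fun x _ => hw x (mem_univ x)
  omega

private lemma td_aux (hδ : 1 ≤ G.minDegree) :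
    ∀ (m : ℕ) (U : Finset V), U.card ≤ m →
      ∃ S : Finset V, (∀ u ∈ U, ∃ w ∈ S, G.Adj u w) ∧
        (S.card : ℝ) ≤ tdF (Fintype.card V) G.minDegree U.card := by
  intro m
  induction m with
  | zero =>
    intro U hU
    have : U = ∅ := Finset.card_eq_zero.1 (Nat.le_zero.1 hU)
    subst this
    exact ⟨∅, by simp, by simp [tdF]⟩
  | succ m ih =>
    intro U hU
    rcases U.eq_empty_or_nonempty with rfl | hne
    · exact ⟨∅, by simp, by simp [tdF]⟩
    · obtain ⟨w, hw⟩ := exists_good_vertex G U hne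
      have hV : Nonempty V := ⟨hne.choose⟩
      have hn0 : 0 < Fintype.card V := Fintype.card_pos
      have hdn : G.minDegree < Fintype.card V :=
        lt_of_le_of_lt (G.minDegree_le_degree hne.choose) (G.degree_lt_card_verts _)
      have hU1 : 1 ≤ U.card := hne.card_pos
      set K := (U.filter fun u => G.Adj u w).card with hK
      have hK1 : 1 ≤ K := by
        rcases Nat.eq_zero_or_pos K with h0 | h; · rw [h0, Nat.mul_zero] at hw; nlinarith
        · exact h
      set U' := U.filter (fun u => ¬ G.Adj u w) with hU'
      have hcard : K + U'.card = U.card := Finset.card_filter_add_card_filter_not _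
      have hU'm : U'.card ≤ m := by omega
      obtain ⟨S', hS'dom, hS'card⟩ := ih U' hU'm
      refine ⟨insert w S', ?_, ?_⟩
      · intro u hu
        by_cases h : G.Adj u w
        · exact ⟨w, Finset.mem_insert_self _ _, h⟩
        · obtain ⟨w', hw1, hw2⟩ := hS'dom u (Finset.mem_filter.2 ⟨hu, h⟩)
          exact ⟨w', Finset.mem_insert_of_mem hw1, hw2⟩
      · have hreal : (U'.card : ℝ) ≤ U.card - U.card * G.minDegree / Fintype.card V := by
          have hn0' : (0:ℝ) < Fintype.card V := by exact_mod_cast hn0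
          have hKge : (U.card : ℝ) * G.minDegree / Fintype.card V ≤ K := by
            rw [div_le_iff₀ hn0']
            have hcast : ((U.card : ℝ)) * G.minDegree ≤ (Fintype.card V : ℝ) * K := by
              exact_mod_cast hw
            linarith
          have : (K:ℝ) + U'.card = U.card := by exact_mod_cast hcard
          linarith
        have hstep := tdF_step (Fintype.card V) G.minDegree U.card U'.card hδ hdn hU1 hreal
        have hins : ((insert w S').card : ℝ) ≤ (S'.card : ℝ) + 1 := by
          exact_mod_cast Finset.card_insert_le w S'
        linarith
end Aux

theorem total_dominating_set_le_card_div_minDegree {V : Type*} [Fintype V] [DecidableEq V]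
    (G : SimpleGraph V) [DecidableRel G.Adj] (hδ : 1 ≤ G.minDegree) :
    ∃ S : Finset V, (∀ v : V, ∃ w ∈ S, G.Adj v w) ∧
      (S.card : ℝ) ≤ ((Fintype.card V : ℝ) / G.minDegree) * (1 + Real.logb 2 G.maxDegree) := by
  cases isEmpty_or_nonempty V with
  | inl h =>
    refine ⟨∅, fun v => isEmptyElim v, ?_⟩
    simp [Fintype.card_eq_zero]
  | inr h =>
    obtain ⟨S, hdom, hcard⟩ := td_aux G hδ (Fintype.card V) univ (le_of_eq card_univ)
    refine ⟨S, fun v => hdom v (mem_univ v), hcard.trans ?_⟩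
    have hn1 : 0 < Fintype.card V := Fintype.card_pos
    have hn0 : (0:ℝ) < Fintype.card V := by exact_mod_cast hn1
    have hδ0 : (0:ℝ) < G.minDegree := by exact_mod_cast hδ
    have hΔδ : G.minDegree ≤ G.maxDegree :=
      le_trans (G.minDegree_le_degree (Classical.arbitrary V)) (G.degree_le_maxDegree _)
    have hΔ1 : (1:ℝ) ≤ G.maxDegree := by exact_mod_cast le_trans hδ hΔδ
    have hlb0 : 0 ≤ Real.logb 2 G.maxDegree := Real.logb_nonneg one_lt_two hΔ1
    rw [card_univ]
    unfold tdF
    split_ifs with hsmall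
    · -- here δ = 1
      have hδ1 : G.minDegree = 1 := by
        by_contra hne1
        have h2 : 2 ≤ G.minDegree := by omega
        nlinarith [hsmall, hn1]
      rw [hδ1]
      push_cast
      rw [div_one]
      nlinarith
    · have hnδ : (Fintype.card V : ℝ) * G.minDegree / Fintype.card V = G.minDegree := by
        rw [mul_comm, mul_div_assoc, div_self hn0.ne', mul_one]
      rw [hnδ]
      have hlog : Real.log G.minDegree ≤ Real.logb 2 G.maxDegree := by
        have h1 : Real.log G.minDegree ≤ Real.log G.maxDegree :=
          Real.log_le_log hδ0 (by exact_mod_cast hΔδ)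
        have h2 : 0 ≤ Real.log G.maxDegree := Real.log_nonneg hΔ1
        have hl2 : Real.log 2 ≤ 1 := by
          have := Real.log_le_sub_one_of_pos (by norm_num : (0:ℝ) < 2); linarith
        have hl2' : 0 < Real.log 2 := Real.log_pos one_lt_two
        rw [Real.logb, le_div_iff₀ hl2']
        nlinarith
      have : (0:ℝ) ≤ (Fintype.card V : ℝ) / G.minDegree := by positivity
      nlinarith
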